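/- Every binary reverse shuffle square of length 2n is an abelian square, and conversely every binary abelian square of length 2n is a reverse shuffle square; hence the number of binary reverse shuffle squares of length 2n is binomial(2n, n). -/

import Mathlib

/-- A word `s` of length `2n` over alphabet `Fin k` is a reverse shuffle square if it
can be partitioned into two disjoint subsequences of length `n` that are reverses of
each other. -/
def IsRevShuffleSquare {n k : ℕ} (s : Fin (2 * n) → Fin k) : Prop :=
  ∃ I J : Fin n → Fin (2 * n), StrictMono I ∧ StrictMono J ∧
    (∀ r r' : Fin n, I r ≠ J r') ∧
    (∀ x : Fin (2 * n), (∃ r, I r = x) ∨ (∃ r, J r = x)) ∧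
    (∀ r : Fin n, s (I r) = s (J r.rev))

/-- A word of length `2n` is an abelian square if its second half is a rearrangement
of its first half. -/
def IsAbelianSquare {n k : ℕ} (s : Fin (2 * n) → Fin k) : Prop :=
  ∃ π : Equiv.Perm (Fin n), ∀ i : Fin n,
    s ⟨n + (i : ℕ), by have := i.isLt; omega⟩
      = s ⟨((π i : Fin n) : ℕ), by have := (π i).isLt; omega⟩

namespace RSSAux

open Finset

variable {n : ℕ}

/-- first-half embedding -/
def fh (i : Fin n) : Fin (2 * n) := ⟨i.1, by have := i.isLt; omega⟩

/-- second-half embedding -/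
def sh (i : Fin n) : Fin (2 * n) := ⟨n + i.1, by have := i.isLt; omega⟩

lemma card_fh_filter (p : Fin (2 * n) → Prop) [DecidablePred p] :
    (univ.filter fun x : Fin (2 * n) => (x : ℕ) < n ∧ p x).card
      = (univ.filter fun i : Fin n => p (fh i)).card := by
  refine Finset.card_bij' (fun x hx => (⟨x.1, (mem_filter.mp hx).2.1⟩ : Fin n))
    (fun i _ => fh i) ?_ ?_ ?_ ?_
  · intro a ha
    have h := (mem_filter.mp ha).2
    simp only [mem_filter, mem_univ, true_and]
    have heq : fh (⟨a.1, h.1⟩ : Fin n) = a := by ext; rfl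
    rw [heq]; exact h.2
  · intro a ha
    have h := (mem_filter.mp ha).2
    simp only [mem_filter, mem_univ, true_and, fh]
    exact ⟨a.isLt, h⟩
  · intro a ha; ext; rfl
  · intro a ha; ext; rfl

lemma card_sh_filter (p : Fin (2 * n) → Prop) [DecidablePred p] :
    (univ.filter fun x : Fin (2 * n) => n ≤ (x : ℕ) ∧ p x).card
      = (univ.filter fun i : Fin n => p (sh i)).card := by
  refine Finset.card_bij' (fun x hx =>
      (⟨x.1 - n, by have := x.isLt; have := (mem_filter.mp hx).2.1; omega⟩ : Fin n))
    (fun i _ => sh i) ?_ ?_ ?_ ?_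
  · intro a ha
    have h := (mem_filter.mp ha).2
    simp only [mem_filter, mem_univ, true_and]
    have heq : sh (⟨a.1 - n, by have := a.isLt; have := h.1; omega⟩ : Fin n) = a := by
      ext; simp only [sh]; omega
    rw [heq]; exact h.2
  · intro a ha
    have h := (mem_filter.mp ha).2
    simp only [mem_filter, mem_univ, true_and, sh]
    exact ⟨Nat.le_add_right _ _, h⟩
  · intro a ha; ext; simp only [sh]; have := (mem_filter.mp ha).2.1; omega
  · intro a ha; ext; simp only [sh]; omega

lemma card_lt_filter : (univ.filter fun x : Fin (2 * n) => (x : ℕ) < n).card = n := by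
  have := card_fh_filter (n := n) (fun _ => True)
  simpa using this

/-- A downward-closed predicate on `Fin n` holds exactly on an initial segment. -/
lemma downclosed_iff (p : Fin n → Prop) [DecidablePred p]
    (hdc : ∀ r r' : Fin n, r' ≤ r → p r → p r') (r : Fin n) :
    p r ↔ (r : ℕ) < (univ.filter p).card := by
  constructor
  · intro hp
    have hsub : Finset.Iic r ⊆ univ.filter p := by
      intro x hx
      simp only [mem_filter, mem_univ, true_and]
      exact hdc r x (mem_Iic.mp hx) hp
    have := Finset.card_le_card hsub
    rw [Fin.card_Iic] at this
    omega
  · intro hc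
    by_contra hp
    have hsub : univ.filter p ⊆ Finset.Iio r := by
      intro x hx
      simp only [mem_filter, mem_univ, true_and] at hx
      rw [mem_Iio]
      by_contra hxr
      exact hp (hdc x r (le_of_not_gt hxr) hx)
    have := Finset.card_le_card hsub
    rw [Fin.card_Iio] at this
    omega

variable {I J : Fin n → Fin (2 * n)}

lemma split_count (hI : Function.Injective I) (hJ : Function.Injective J)
    (hIJ : ∀ r r' : Fin n, I r ≠ J r')
    (hcov : ∀ x : Fin (2 * n), (∃ r, I r = x) ∨ (∃ r, J r = x)) :
    (univ.filter fun r : Fin n => (I r : ℕ) < n).card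
      + (univ.filter fun r : Fin n => (J r : ℕ) < n).card = n := by
  classical
  have himg : (univ.filter fun r : Fin n => (I r : ℕ) < n).image I
      ∪ (univ.filter fun r : Fin n => (J r : ℕ) < n).image J
      = univ.filter (fun x : Fin (2 * n) => (x : ℕ) < n) := by
    ext x
    simp only [mem_union, mem_image, mem_filter, mem_univ, true_and]
    constructor
    · rintro (⟨a, ha, rfl⟩ | ⟨a, ha, rfl⟩) <;> exact ha
    · intro hx
      rcases hcov x with ⟨r, rfl⟩ | ⟨r, rfl⟩
      · exact Or.inl ⟨r, hx, rfl⟩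
      · exact Or.inr ⟨r, hx, rfl⟩
  have hdisj : Disjoint ((univ.filter fun r : Fin n => (I r : ℕ) < n).image I)
      ((univ.filter fun r : Fin n => (J r : ℕ) < n).image J) := by
    rw [Finset.disjoint_left]
    intro x hx hy
    simp only [mem_image] at hx hy
    obtain ⟨a, _, rfl⟩ := hx
    obtain ⟨b, _, hb⟩ := hy
    exact hIJ a b hb.symm
  have := Finset.card_union_of_disjoint hdisj
  rw [himg, card_lt_filter, Finset.card_image_of_injective _ hI,
    Finset.card_image_of_injective _ hJ] at this
  omega

/-- The key flip lemma: for each `r`, exactly one of `I r`, `J r.rev` lies in the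
first half. -/
lemma flip (hI : StrictMono I) (hJ : StrictMono J)
    (hIJ : ∀ r r' : Fin n, I r ≠ J r')
    (hcov : ∀ x : Fin (2 * n), (∃ r, I r = x) ∨ (∃ r, J r = x)) (r : Fin n) :
    ((I r : ℕ) < n ↔ ¬ ((J r.rev : ℕ) < n)) := by
  classical
  have hdcI : ∀ a b : Fin n, b ≤ a → (I a : ℕ) < n → (I b : ℕ) < n := by
    intro a b hba ha
    have : I b ≤ I a := hI.monotone hba
    have : (I b : ℕ) ≤ (I a : ℕ) := this
    omega
  have hdcJ : ∀ a b : Fin n, b ≤ a → (J a : ℕ) < n → (J b : ℕ) < n := by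
    intro a b hba ha
    have : J b ≤ J a := hJ.monotone hba
    have : (J b : ℕ) ≤ (J a : ℕ) := this
    omega
  have h1 := downclosed_iff _ hdcI r
  have h2 := downclosed_iff _ hdcJ r.rev
  have h3 := split_count hI.injective hJ.injective hIJ hcov
  have h4 : (r.rev : ℕ) = n - ((r : ℕ) + 1) := Fin.val_rev r
  have h5 := r.isLt
  have h6 : (univ.filter fun r : Fin n => (I r : ℕ) < n).card ≤ n := by
    have := Finset.card_filter_le (univ : Finset (Fin n)) (fun r => (I r : ℕ) < n)
    simpa using this
  omega

lemma rev_to_abelian {k : ℕ} {s : Fin (2 * n) → Fin k}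
    (h : IsRevShuffleSquare s) : IsAbelianSquare s := by
  classical
  obtain ⟨I, J, hI, hJ, hIJ, hcov, hlet⟩ := h
  have key : ∀ i : Fin n, ∃ j : Fin n, s (sh i) = s (fh j) ∧
      ((∃ r, I r = sh i ∧ J r.rev = fh j) ∨ (∃ r, J r = sh i ∧ I r.rev = fh j)) := by
    intro i
    have hge : n ≤ ((sh i : Fin (2 * n)) : ℕ) := Nat.le_add_right _ _
    rcases hcov (sh i) with ⟨r, hr⟩ | ⟨r, hr⟩
    · have hIr : ¬ ((I r : ℕ) < n) := by rw [hr]; omega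
      have hJr : (J r.rev : ℕ) < n := by
        have := flip hI hJ hIJ hcov r
        tauto
      refine ⟨⟨(J r.rev : ℕ), hJr⟩, ?_, Or.inl ⟨r, hr, by ext; rfl⟩⟩
      have hfh : fh (⟨(J r.rev : ℕ), hJr⟩ : Fin n) = J r.rev := by ext; rfl
      rw [hfh, ← hr]; exact hlet r
    · set r₀ := r.rev with hr₀
      have hrr : r₀.rev = r := Fin.rev_rev r
      have hJr : ¬ ((J r₀.rev : ℕ) < n) := by rw [hrr, hr]; omega
      have hIr : (I r₀ : ℕ) < n := by
        have := flip hI hJ hIJ hcov r₀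
        tauto
      refine ⟨⟨(I r₀ : ℕ), hIr⟩, ?_, Or.inr ⟨r, hr, by rw [← hr₀]; ext; rfl⟩⟩
      have hfh : fh (⟨(I r₀ : ℕ), hIr⟩ : Fin n) = I r₀ := by ext; rfl
      rw [hfh, ← hr, ← hrr]; exact (hlet r₀).symm
  choose f hfs hfd using key
  have hinj : Function.Injective f := by
    intro i i' he
    rcases hfd i with ⟨r, h1, h2⟩ | ⟨r, h1, h2⟩ <;>
      rcases hfd i' with ⟨r', h1', h2'⟩ | ⟨r', h1', h2'⟩
    · rw [he] at h2
      have : r.rev = r'.rev := hJ.injective (h2.trans h2'.symm)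
      have : r = r' := by rw [← Fin.rev_rev r, this, Fin.rev_rev]
      subst this
      have : sh i = sh i' := h1.symm.trans h1'
      have : n + (i : ℕ) = n + (i' : ℕ) := congrArg Fin.val this
      ext; omega
    · rw [he] at h2
      exact absurd (h2'.trans h2.symm) (hIJ r'.rev r.rev)
    · rw [he] at h2
      exact absurd (h2.trans h2'.symm) (hIJ r.rev r'.rev)
    · rw [he] at h2
      have : r.rev = r'.rev := hI.injective (h2.trans h2'.symm)
      have : r = r' := by rw [← Fin.rev_rev r, this, Fin.rev_rev]
      subst this
      have : sh i = sh i' := h1.symm.trans h1'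
      have : n + (i : ℕ) = n + (i' : ℕ) := congrArg Fin.val this
      ext; omega
  refine ⟨Equiv.ofBijective f (Finite.injective_iff_bijective.mp hinj), fun i => ?_⟩
  exact hfs i

lemma abelian_counts {s : Fin (2 * n) → Fin 2} (h : IsAbelianSquare s) :
    (univ.filter fun i : Fin n => s (sh i) = 1).card
      = (univ.filter fun i : Fin n => s (fh i) = 1).card := by
  classical
  obtain ⟨π, hπ⟩ := h
  have h1 : ∀ i : Fin n, s (sh i) = s (fh (π i)) := fun i => hπ i
  have h2 : (univ.filter fun i : Fin n => s (sh i) = 1)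
      = univ.filter fun i : Fin n => s (fh (π i)) = 1 := by
    apply Finset.filter_congr
    intro i _
    rw [h1 i]
  rw [h2]
  apply Finset.card_equiv π
  intro i
  simp

/-- two binary letters agreeing on "being one" are equal -/
lemma fin2_eq {a b : Fin 2} (h : a = 1 ↔ b = 1) : a = b := by
  revert h; revert a b; decide

lemma counts_to_rev {s : Fin (2 * n) → Fin 2}
    (h : (univ.filter fun i : Fin n => s (sh i) = 1).card
      = (univ.filter fun i : Fin n => s (fh i) = 1).card) :
    IsRevShuffleSquare s := by
  classical
  set A : Finset (Fin (2 * n)) :=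
    univ.filter (fun x => ((x : ℕ) < n ∧ s x = 1) ∨ (n ≤ (x : ℕ) ∧ s x ≠ 1)) with hA
  have hmemA : ∀ x ∈ A, (s x = 1 ↔ (x : ℕ) < n) := by
    intro x hx
    rw [hA, mem_filter] at hx
    rcases hx.2 with ⟨h1, h2⟩ | ⟨h1, h2⟩
    · exact ⟨fun _ => h1, fun _ => h2⟩
    · constructor
      · intro h3; exact absurd h3 h2
      · intro h3; exact absurd h3 (by omega)
  have hmemAc : ∀ x ∈ Aᶜ, (s x = 1 ↔ n ≤ (x : ℕ)) := by
    intro x hx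
    rw [Finset.mem_compl, hA, mem_filter] at hx
    push_neg at hx
    have hx' := hx (mem_univ x)
    by_cases hlt : (x : ℕ) < n
    · constructor
      · intro h3; exact absurd h3 (hx'.1 hlt)
      · intro h3; exact absurd h3 (by omega)
    · have := hx'.2 (by omega)
      exact ⟨fun _ => by omega, fun _ => this⟩
  -- cardinality of A
  have hcardA : A.card = n := by
    have hsplit : A = (univ.filter fun x : Fin (2 * n) => (x : ℕ) < n ∧ s x = 1)
        ∪ (univ.filter fun x : Fin (2 * n) => n ≤ (x : ℕ) ∧ s x ≠ 1) := by
      rw [hA, Finset.filter_or]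
    have hdisj : Disjoint (univ.filter fun x : Fin (2 * n) => (x : ℕ) < n ∧ s x = 1)
        (univ.filter fun x : Fin (2 * n) => n ≤ (x : ℕ) ∧ s x ≠ 1) := by
      rw [Finset.disjoint_left]
      intro x hx hy
      rw [mem_filter] at hx hy
      omega
    rw [hsplit, Finset.card_union_of_disjoint hdisj,
      card_fh_filter (fun x => s x = 1), card_sh_filter (fun x => s x ≠ 1)]
    have hnot : (univ.filter fun i : Fin n => s (sh i) ≠ 1).card
        = n - (univ.filter fun i : Fin n => s (sh i) = 1).card := by
      rw [Finset.filter_not, Finset.card_sdiff_of_subset (Finset.filter_subset _ _)]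
      simp
    rw [hnot, ← h]
    have hle : (univ.filter fun i : Fin n => s (sh i) = 1).card ≤ n := by
      have := Finset.card_filter_le (univ : Finset (Fin n)) (fun i => s (sh i) = 1)
      simpa using this
    omega
  have hcardAc : Aᶜ.card = n := by
    rw [Finset.card_compl, hcardA]
    simp [two_mul]
  set I := A.orderEmbOfFin hcardA with hI
  set J := Aᶜ.orderEmbOfFin hcardAc with hJ
  have hImem : ∀ r, (I r : Fin (2 * n)) ∈ A := fun r => A.orderEmbOfFin_mem hcardA r
  have hJmem : ∀ r, (J r : Fin (2 * n)) ∈ Aᶜ := fun r => Aᶜ.orderEmbOfFin_mem hcardAc r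
  have hIJ : ∀ r r' : Fin n, (I r : Fin (2 * n)) ≠ J r' := by
    intro r r' he
    have h1 := hImem r
    have h2 := hJmem r'
    rw [he] at h1
    exact (Finset.mem_compl.mp h2) h1
  have hcov : ∀ x : Fin (2 * n), (∃ r, (I r : Fin (2 * n)) = x) ∨ ∃ r, (J r : Fin (2 * n)) = x := by
    intro x
    by_cases hx : x ∈ A
    · left
      have : x ∈ Set.range (A.orderEmbOfFin hcardA) := by
        rw [Finset.range_orderEmbOfFin]; exact hx
      exact this
    · right
      have : x ∈ Set.range (Aᶜ.orderEmbOfFin hcardAc) := by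
        rw [Finset.range_orderEmbOfFin]; simpa using hx
      exact this
  refine ⟨I, J, (A.orderEmbOfFin hcardA).strictMono, (Aᶜ.orderEmbOfFin hcardAc).strictMono,
    hIJ, hcov, ?_⟩
  intro r
  have hflip := flip (I := fun r => I r) (J := fun r => J r)
    (A.orderEmbOfFin hcardA).strictMono (Aᶜ.orderEmbOfFin hcardAc).strictMono hIJ hcov r
  apply fin2_eq
  rw [hmemA _ (hImem r), hmemAc _ (hJmem r.rev)]
  constructor
  · intro h1; exact Nat.le_of_not_lt (hflip.mp h1)
  · intro h1; exact hflip.mpr (Nat.not_lt.mpr h1)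

/-- counting words with a fixed number of ones -/
lemma card_ones (m k : ℕ) :
    (univ.filter fun s : Fin m → Fin 2 => (univ.filter fun x => s x = 1).card = k).card
      = m.choose k := by
  classical
  have hp : (Finset.powersetCard k (univ : Finset (Fin m))).card = m.choose k := by
    rw [Finset.card_powersetCard, Finset.card_univ, Fintype.card_fin]
  rw [← hp]
  refine Finset.card_bij' (fun s _ => univ.filter fun x => s x = 1)
    (fun A _ => fun x => if x ∈ A then 1 else 0) ?_ ?_ ?_ ?_
  · intro s hs
    rw [Finset.mem_powersetCard]
    exact ⟨Finset.subset_univ _, (mem_filter.mp hs).2⟩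
  · intro A hA
    rw [Finset.mem_powersetCard] at hA
    simp only [mem_filter, mem_univ, true_and]
    rw [← hA.2]
    congr 1
    ext x
    simp only [mem_filter, mem_univ, true_and]
    by_cases hx : x ∈ A <;> simp [hx]
  · intro s hs
    funext x
    by_cases hx : s x = 1
    · simp [hx]
    · have h0 : s x = 0 := by
        have : ∀ b : Fin 2, b ≠ 1 → b = 0 := by decide
        exact this _ hx
      simp [hx, h0]
  · intro A hA
    ext x
    simp only [mem_filter, mem_univ, true_and]
    by_cases hx : x ∈ A <;> simp [hx]

/-- the flip-second-half involution -/
def F (s : Fin (2 * n) → Fin 2) : Fin (2 * n) → Fin 2 :=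
  fun x => if n ≤ (x : ℕ) then 1 - s x else s x

lemma F_invol : Function.Involutive (F (n := n)) := by
  intro s
  funext x
  simp only [F]
  by_cases hx : n ≤ (x : ℕ)
  · rw [if_pos hx, if_pos hx]
    have : ∀ b : Fin 2, 1 - (1 - b) = b := by decide
    exact this _
  · rw [if_neg hx, if_neg hx]

lemma card_counts_eq :
    (univ.filter fun s : Fin (2 * n) → Fin 2 =>
        (univ.filter fun i : Fin n => s (sh i) = 1).card
          = (univ.filter fun i : Fin n => s (fh i) = 1).card).card
      = (2 * n).choose n := by
  classical
  rw [← card_ones (2 * n) n]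
  apply Finset.card_equiv (F_invol (n := n)).toPerm
  intro s
  simp only [mem_filter, mem_univ, true_and]
  have hswap : (univ.filter fun x : Fin (2 * n) => F s x = 1)
      = (univ.filter fun x : Fin (2 * n) => (x : ℕ) < n ∧ s x = 1)
        ∪ (univ.filter fun x : Fin (2 * n) => n ≤ (x : ℕ) ∧ s x ≠ 1) := by
    ext x
    simp only [mem_union, mem_filter, mem_univ, true_and]
    simp only [F]
    have fin2sub : ∀ b : Fin 2, (1 - b = 1 ↔ b ≠ 1) := by decide
    by_cases hx : n ≤ (x : ℕ)
    · rw [if_pos hx]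
      constructor
      · intro h1
        exact Or.inr ⟨hx, (fin2sub _).mp h1⟩
      · rintro (⟨h1, _⟩ | ⟨_, h2⟩)
        · exact absurd h1 (by omega)
        · exact (fin2sub _).mpr h2
    · rw [if_neg hx]
      constructor
      · intro h1; exact Or.inl ⟨by omega, h1⟩
      · rintro (⟨_, h2⟩ | ⟨h1, _⟩)
        · exact h2
        · exact absurd h1 hx
  have hdisj : Disjoint (univ.filter fun x : Fin (2 * n) => (x : ℕ) < n ∧ s x = 1)
      (univ.filter fun x : Fin (2 * n) => n ≤ (x : ℕ) ∧ s x ≠ 1) := by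
    rw [Finset.disjoint_left]
    intro x hx hy
    rw [mem_filter] at hx hy
    omega
  have heq : Function.Involutive.toPerm (F (n := n)) (F_invol (n := n)) s = F s := rfl
  rw [heq, hswap, Finset.card_union_of_disjoint hdisj,
    card_fh_filter (fun x => s x = 1), card_sh_filter (fun x => s x ≠ 1)]
  have hnot : (univ.filter fun i : Fin n => s (sh i) ≠ 1).card
      = n - (univ.filter fun i : Fin n => s (sh i) = 1).card := by
    rw [Finset.filter_not, Finset.card_sdiff_of_subset (Finset.filter_subset _ _)]
    simp
  rw [hnot]
  have hle1 : (univ.filter fun i : Fin n => s (sh i) = 1).card ≤ n := by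
    have := Finset.card_filter_le (univ : Finset (Fin n)) (fun i => s (sh i) = 1)
    simpa using this
  have hle2 : (univ.filter fun i : Fin n => s (fh i) = 1).card ≤ n := by
    have := Finset.card_filter_le (univ : Finset (Fin n)) (fun i => s (fh i) = 1)
    simpa using this
  omega

end RSSAux

open scoped Classical in
theorem binary_revShuffleSquare_iff_abelianSquare (n : ℕ) :
    (∀ s : Fin (2 * n) → Fin 2, IsRevShuffleSquare s ↔ IsAbelianSquare s) ∧
      (Finset.univ.filter
        (fun s : Fin (2 * n) → Fin 2 => IsRevShuffleSquare s)).card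
        = (2 * n).choose n := by
  classical
  have hiff : ∀ s : Fin (2 * n) → Fin 2, IsRevShuffleSquare s ↔ IsAbelianSquare s := by
    intro s
    constructor
    · exact RSSAux.rev_to_abelian
    · intro h
      exact RSSAux.counts_to_rev (RSSAux.abelian_counts h)
  refine ⟨hiff, ?_⟩
  have hiff2 : ∀ s : Fin (2 * n) → Fin 2, IsRevShuffleSquare s ↔
      (Finset.univ.filter fun i : Fin n => s (RSSAux.sh i) = 1).card
        = (Finset.univ.filter fun i : Fin n => s (RSSAux.fh i) = 1).card := by
    intro s
    constructor
    · intro h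
      exact RSSAux.abelian_counts ((hiff s).mp h)
    · exact RSSAux.counts_to_rev
  rw [show (Finset.univ.filter fun s : Fin (2 * n) → Fin 2 => IsRevShuffleSquare s)
      = Finset.univ.filter (fun s : Fin (2 * n) → Fin 2 =>
          (Finset.univ.filter fun i : Fin n => s (RSSAux.sh i) = 1).card
            = (Finset.univ.filter fun i : Fin n => s (RSSAux.fh i) = 1).card) from
    Finset.filter_congr (fun s _ => by rw [hiff2 s])]
  exact RSSAux.card_counts_eq
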